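/- Let p > 2 > q > 1 and let C₁, C₂ > 0. Then there exists μ* > 0 such that for every μ ∈ (0, μ*) there exist real numbers 0 < r₁ < r₂ such that for all r > 0, the inequality C₁ r^(p-1) + μ C₂ r^(q-1) ≤ r holds if and only if r ∈ [r₁, r₂]. -/

import Mathlib

open Real Set

lemma aux_deriv (p q A B : ℝ) (r : ℝ) (hr : 0 < r) :
    HasDerivAt (fun x : ℝ => A * x ^ (p-2) + B * x ^ (q-2) - 1)
      (r ^ (q-3) * (A * (p-2) * r ^ (p-q) - B * (2-q))) r := by
  have h1 := ((Real.hasDerivAt_rpow_const (p := p - 2) (Or.inl hr.ne'))).const_mul A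
  have h2 := ((Real.hasDerivAt_rpow_const (p := q - 2) (Or.inl hr.ne'))).const_mul B
  have := (h1.add h2).sub_const 1
  refine this.congr_deriv ?_
  rw [show p - 2 - 1 = (q-3) + (p-q) by ring, Real.rpow_add hr,
    show q - 2 - 1 = q - 3 by ring]
  ring

lemma aux_main (p q A B : ℝ) (hq1 : 1 < q) (hq2 : q < 2) (hp : 2 < p)
    (hA : 0 < A) (hB : 0 < B) (r₀ : ℝ) (hr₀ : 0 < r₀)
    (hneg : A * r₀ ^ (p-2) + B * r₀ ^ (q-2) < 1) :
    ∃ r₁ r₂ : ℝ, 0 < r₁ ∧ r₁ < r₂ ∧ ∀ r > (0:ℝ),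
      (A * r ^ (p-2) + B * r ^ (q-2) ≤ 1 ↔ r ∈ Set.Icc r₁ r₂) := by
  set h : ℝ → ℝ := fun x => A * x ^ (p-2) + B * x ^ (q-2) - 1 with hh
  have hpq : 0 < p - q := by linarith
  have hK : 0 < B * (2-q) / (A * (p-2)) :=
    div_pos (mul_pos hB (by linarith)) (mul_pos hA (by linarith))
  set K : ℝ := B * (2-q) / (A * (p-2)) with hKdef
  set rm : ℝ := K ^ (p-q)⁻¹ with hrm
  have hrm_pos : 0 < rm := Real.rpow_pos_of_pos hK _
  have hrm_pow : rm ^ (p-q) = K := Real.rpow_inv_rpow hK.le hpq.ne'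
  have hsign : ∀ x : ℝ, 0 < x →
      ((A * (p-2) * x ^ (p-q) - B * (2-q) < 0 ↔ x < rm) ∧
       (0 < A * (p-2) * x ^ (p-q) - B * (2-q) ↔ rm < x)) := by
    intro x hx
    have hiff : x ^ (p-q) < rm ^ (p-q) ↔ x < rm :=
      Real.rpow_lt_rpow_iff hx.le hrm_pos.le hpq
    have hiff2 : rm ^ (p-q) < x ^ (p-q) ↔ rm < x :=
      Real.rpow_lt_rpow_iff hrm_pos.le hx.le hpq
    have hApos : 0 < A * (p-2) := mul_pos hA (by linarith)
    constructor
    · rw [sub_neg, ← hiff, hrm_pow, hKdef, lt_div_iff₀ hApos]; ring_nf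
    · rw [sub_pos, ← hiff2, hrm_pow, hKdef, div_lt_iff₀ hApos]; ring_nf
  have hcont : ∀ s : Set ℝ, s ⊆ Ioi 0 → ContinuousOn h s := by
    intro s hs x hx
    have hx0 : (x:ℝ) ≠ 0 := (hs hx).out.ne'
    have c1 : ContinuousAt (fun y : ℝ => y ^ (p-2)) x :=
      Real.continuousAt_rpow_const x _ (Or.inl hx0)
    have c2 : ContinuousAt (fun y : ℝ => y ^ (q-2)) x :=
      Real.continuousAt_rpow_const x _ (Or.inl hx0)
    have : ContinuousAt h x := (((c1.const_mul A).add (c2.const_mul B)).sub continuousAt_const : ContinuousAt (fun y : ℝ => A * y ^ (p-2) + B * y ^ (q-2) - 1) x)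
    exact this.continuousWithinAt
  have hanti : StrictAntiOn h (Ioc 0 rm) := by
    apply strictAntiOn_of_deriv_neg (convex_Ioc 0 rm) (hcont _ Ioc_subset_Ioi_self)
    intro x hx
    rw [interior_Ioc] at hx
    rw [(aux_deriv p q A B x hx.1).deriv]
    exact mul_neg_of_pos_of_neg (Real.rpow_pos_of_pos hx.1 _) (((hsign x hx.1).1).mpr hx.2)
  have hmono : StrictMonoOn h (Ici rm) := by
    apply strictMonoOn_of_deriv_pos (convex_Ici rm)
      (hcont _ fun x hx => lt_of_lt_of_le hrm_pos hx)
    intro x hx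
    rw [interior_Ici] at hx
    have hx0 : 0 < x := hrm_pos.trans hx
    rw [(aux_deriv p q A B x hx0).deriv]
    exact mul_pos (Real.rpow_pos_of_pos hx0 _) (((hsign x hx0).2).mpr hx)
  have hr₀neg : h r₀ < 0 := by simp only [hh]; linarith
  have hrmneg : h rm < 0 := by
    rcases le_or_gt r₀ rm with hc | hc
    · exact lt_of_le_of_lt (hanti.antitoneOn ⟨hr₀, hc⟩ ⟨hrm_pos, le_refl _⟩ hc) hr₀neg
    · exact lt_of_le_of_lt (hmono.monotoneOn self_mem_Ici hc.le hc.le) hr₀neg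
  -- small point with h > 0
  set ε : ℝ := min rm (B ^ (2-q)⁻¹) / 2 with hε
  have hBpow : 0 < B ^ (2-q)⁻¹ := Real.rpow_pos_of_pos hB _
  have hεpos : 0 < ε := by
    have := lt_min hrm_pos hBpow; positivity
  have hεrm : ε < rm := by
    have := min_le_left rm (B ^ (2-q)⁻¹); rw [hε]; linarith
  have hεB : ε ^ (2-q) < B := by
    have h1 : ε < B ^ (2-q)⁻¹ := by
      have := min_le_right rm (B ^ (2-q)⁻¹); rw [hε]; linarith
    calc ε ^ (2-q) < (B ^ (2-q)⁻¹) ^ (2-q) :=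
          Real.rpow_lt_rpow hεpos.le h1 (by linarith)
      _ = B := Real.rpow_inv_rpow hB.le (by linarith)
  have hεh : 0 < h ε := by
    have hεq : ε ^ (q-2) = (ε ^ (2-q))⁻¹ := by
      rw [show q - 2 = -(2-q) by ring, Real.rpow_neg hεpos.le]
    have h2 : 1 < B * ε ^ (q-2) := by
      rw [hεq, ← div_eq_mul_inv]
      exact (one_lt_div (Real.rpow_pos_of_pos hεpos _)).mpr hεB
    have h3 : 0 < A * ε ^ (p-2) := mul_pos hA (Real.rpow_pos_of_pos hεpos _)
    simp only [hh]; linarith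
  -- big point with h > 0
  set M : ℝ := rm + A⁻¹ ^ (p-2)⁻¹ with hM
  have hcpos : 0 < A⁻¹ ^ (p-2)⁻¹ := Real.rpow_pos_of_pos (by positivity) _
  have hMrm : rm < M := by rw [hM]; linarith
  have hMpos : 0 < M := hrm_pos.trans hMrm
  have hMh : 0 < h M := by
    have h1 : A⁻¹ ^ (p-2)⁻¹ ≤ M := by rw [hM]; linarith
    have h2 : A⁻¹ ≤ M ^ (p-2) := by
      calc A⁻¹ = (A⁻¹ ^ (p-2)⁻¹) ^ (p-2) :=
            (Real.rpow_inv_rpow (by positivity) (by intro hc; linarith [hc]; )).symm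
        _ ≤ M ^ (p-2) := Real.rpow_le_rpow hcpos.le h1 (by linarith)
    have h3 : 1 ≤ A * M ^ (p-2) := by
      calc (1:ℝ) = A * A⁻¹ := (mul_inv_cancel₀ hA.ne').symm
        _ ≤ A * M ^ (p-2) := mul_le_mul_of_nonneg_left h2 hA.le
    have h4 : 0 < B * M ^ (q-2) := mul_pos hB (Real.rpow_pos_of_pos hMpos _)
    simp only [hh]; linarith
  -- IVT for r₁
  obtain ⟨r₁, hr₁mem, hr₁0⟩ : ∃ r₁ ∈ Icc ε rm, h r₁ = 0 := by
    have := intermediate_value_Icc' hεrm.le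
      (hcont _ (fun x hx => lt_of_lt_of_le hεpos hx.1))
    have h0 : (0:ℝ) ∈ Icc (h rm) (h ε) := ⟨hrmneg.le, hεh.le⟩
    obtain ⟨r₁, hr₁, hr₁0⟩ := this h0
    exact ⟨r₁, hr₁, hr₁0⟩
  obtain ⟨r₂, hr₂mem, hr₂0⟩ : ∃ r₂ ∈ Icc rm M, h r₂ = 0 := by
    have := intermediate_value_Icc hMrm.le
      (hcont _ (fun x hx => lt_of_lt_of_le hrm_pos hx.1))
    have h0 : (0:ℝ) ∈ Icc (h rm) (h M) := ⟨hrmneg.le, hMh.le⟩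
    obtain ⟨r₂, hr₂, hr₂0⟩ := this h0
    exact ⟨r₂, hr₂, hr₂0⟩
  have hr₁pos : 0 < r₁ := lt_of_lt_of_le hεpos hr₁mem.1
  have hr₁rm : r₁ < rm := lt_of_le_of_ne hr₁mem.2 (by rintro rfl; exact absurd hr₁0 hrmneg.ne)
  have hrmr₂ : rm < r₂ := lt_of_le_of_ne hr₂mem.1 (by rintro rfl; exact absurd hr₂0.symm hrmneg.ne')
  refine ⟨r₁, r₂, hr₁pos, hr₁rm.trans hrmr₂, fun r hr => ?_⟩
  have key : h r ≤ 0 ↔ r ∈ Icc r₁ r₂ := by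
    constructor
    · intro hle
      by_contra hc
      rw [mem_Icc, not_and_or] at hc
      rcases hc with hc | hc
      · push_neg at hc
        have := hanti ⟨hr, hc.le.trans hr₁rm.le⟩ ⟨hr₁pos, hr₁rm.le⟩ hc
        rw [hr₁0] at this; linarith
      · push_neg at hc
        have := hmono (le_of_lt hrmr₂ : rm ≤ r₂) (hrmr₂.le.trans hc.le) hc
        rw [hr₂0] at this; linarith
    · rintro ⟨hle1, hle2⟩
      rcases le_or_gt r rm with hc | hc
      · have := hanti.antitoneOn ⟨hr₁pos, hr₁rm.le⟩ ⟨hr, hc⟩ hle1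
        rw [hr₁0] at this; linarith
      · have := hmono.monotoneOn (hc.le : r ∈ Ici rm) (hrmr₂.le : r₂ ∈ Ici rm) hle2
        rw [hr₂0] at this; linarith
  rw [← key]
  simp only [hh]
  constructor <;> intro <;> linarith

/-- For `1 < q < 2 < p` and `C₁, C₂ > 0`, there exists `μ* > 0` such that for every
`μ ∈ (0, μ*)` there are `0 < r₁ < r₂` with: for all `r > 0`,
`C₁ r^(p-1) + μ C₂ r^(q-1) ≤ r` iff `r ∈ [r₁, r₂]`. -/
theorem stmt_0 (p q C₁ C₂ : ℝ) (hq1 : 1 < q) (hq2 : q < 2) (hp : 2 < p)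
    (hC₁ : 0 < C₁) (hC₂ : 0 < C₂) :
    ∃ μstar > (0 : ℝ), ∀ μ ∈ Set.Ioo (0 : ℝ) μstar,
      ∃ r₁ r₂ : ℝ, 0 < r₁ ∧ r₁ < r₂ ∧
        ∀ r > (0 : ℝ),
          (C₁ * r ^ (p - 1) + μ * C₂ * r ^ (q - 1) ≤ r ↔ r ∈ Set.Icc r₁ r₂) := by
  have h2C₁ : (0:ℝ) < 2 * C₁ := by linarith
  set r₀ : ℝ := (2 * C₁) ^ (-(p-2)⁻¹) with hr₀def
  have hr₀pos : 0 < r₀ := Real.rpow_pos_of_pos h2C₁ _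
  have hp2 : p - 2 ≠ 0 := by intro hc; linarith [hc]
  have hr₀pow : C₁ * r₀ ^ (p-2) = 1/2 := by
    rw [hr₀def, ← Real.rpow_mul h2C₁.le,
      show -(p-2)⁻¹ * (p-2) = -1 by field_simp, Real.rpow_neg_one]
    field_simp
  set μstar : ℝ := r₀ ^ (2-q) / (2 * C₂) with hμs
  have hμspos : 0 < μstar := div_pos (Real.rpow_pos_of_pos hr₀pos _) (by linarith)
  refine ⟨μstar, hμspos, fun μ hμ => ?_⟩
  obtain ⟨hμ0, hμlt⟩ := hμ
  have hB : 0 < μ * C₂ := mul_pos hμ0 hC₂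
  have hBr : μ * C₂ * r₀ ^ (q-2) < 1/2 := by
    have hq2pos : 0 < r₀ ^ (q-2) := Real.rpow_pos_of_pos hr₀pos _
    have h1 : μ * C₂ * r₀ ^ (q-2) < μstar * C₂ * r₀ ^ (q-2) := by
      apply mul_lt_mul_of_pos_right _ hq2pos
      exact mul_lt_mul_of_pos_right hμlt hC₂
    have h2 : μstar * C₂ * r₀ ^ (q-2) = 1/2 := by
      rw [hμs]
      have : r₀ ^ (2-q) * r₀ ^ (q-2) = 1 := by
        rw [← Real.rpow_add hr₀pos]; norm_num
      field_simp
      nlinarith [this]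
    linarith
  have hneg : C₁ * r₀ ^ (p-2) + μ * C₂ * r₀ ^ (q-2) < 1 := by
    rw [hr₀pow]; linarith
  obtain ⟨r₁, r₂, h1, h2, h3⟩ := aux_main p q C₁ (μ * C₂) hq1 hq2 hp hC₁ hB r₀ hr₀pos hneg
  refine ⟨r₁, r₂, h1, h2, fun r hr => ?_⟩
  rw [← h3 r hr]
  have e1 : r ^ (p-1) = r ^ (p-2) * r := by
    rw [show p - 1 = (p-2) + 1 by ring, Real.rpow_add_one hr.ne']
  have e2 : r ^ (q-1) = r ^ (q-2) * r := by
    rw [show q - 1 = (q-2) + 1 by ring, Real.rpow_add_one hr.ne']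
  rw [e1, e2, show C₁ * (r ^ (p-2) * r) + μ * C₂ * (r ^ (q-2) * r)
    = (C₁ * r ^ (p-2) + μ * C₂ * r ^ (q-2)) * r by ring]
  exact mul_le_iff_le_one_left hr
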